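/- Let S ⊆ V with s ∈ S, S ≠ V, and let θ̂ satisfy θ̂ ≥ max{θ : there exists a tour leaving S for the first time at time θ}. Then the lifted subtour elimination constraint Σ_{(u,v,θ): u∈S, v∉S, θ≤θ̂} x_{uv,θ} ≥ 1 is satisfied by the time-expanded incidence vector of every tour with arrival time at most θ^max. -/

import Mathlib

/-- Arrival time after traversing the vertices of `rest` starting from `u` at time `θ`. -/
def arrival {n : ℕ} (c : Fin n → Fin n → ℕ → ℕ) : Fin n → ℕ → List (Fin n) → ℕ
  | _, θ, [] => θ
  | u, θ, v :: rest => arrival c v (θ + c u v θ) rest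

/-- A TDTSP tour: a Hamiltonian ordering of the vertices starting at the source `0`. -/
def IsTour (n : ℕ) [NeZero n] (L : List (Fin n)) : Prop :=
  L.Nodup ∧ L.length = n ∧ L.head? = some 0

/-- The arrival time of a tour back at the source, departing at time 0. -/
def tourArrival {n : ℕ} [NeZero n] (c : Fin n → Fin n → ℕ → ℕ) (L : List (Fin n)) : ℕ :=
  arrival c 0 0 (L.tail ++ [0])

/-- The time-dependent triangle inequality. -/
def TriIneq {n : ℕ} (c : Fin n → Fin n → ℕ → ℕ) (θmax : ℕ) : Prop :=
  ∀ u v w θ, θ + c u v θ ≤ θmax → c u w θ ≤ c u v θ + c v w (θ + c u v θ)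

/-- The cyclically consecutive pairs (the arcs) of a cyclic vertex list. -/
def cyclePairs {α : Type*} (L : List α) : List (α × α) := L.zip (L.tail ++ L.take 1)

/-- A Hamiltonian cycle of an undirected graph, as a cyclic vertex list. -/
def IsHamCycle {n : ℕ} (G : SimpleGraph (Fin n)) (L : List (Fin n)) : Prop :=
  L.Nodup ∧ L.length = n ∧ ∀ p ∈ cyclePairs L, G.Adj p.1 p.2

/-- The static (time-independent) cost of a cyclic vertex list. -/
def staticTourCost {n : ℕ} (c : Fin n → Fin n → ℕ) (L : List (Fin n)) : ℕ :=
  ((cyclePairs L).map fun p => c p.1 p.2).sum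

/-- Static costs: 1 on edges of `G`, 2 otherwise. -/
def cst {n : ℕ} (G : SimpleGraph (Fin n)) [DecidableRel G.Adj] (u v : Fin n) : ℕ :=
  if G.Adj u v then 1 else 2

/-- The time-expanded arcs traversed starting from `u` at time `θ` along a vertex list. -/
def arcsT {n : ℕ} (c : Fin n → Fin n → ℕ → ℕ) :
    Fin n → ℕ → List (Fin n) → List (Fin n × Fin n × ℕ)
  | _, _, [] => []
  | u, θ, v :: rest => (u, v, θ) :: arcsT c v (θ + c u v θ) rest

/-- The time-expanded arcs of a tour (departing the source `0` at time 0). -/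
def tourArcsT {n : ℕ} [NeZero n] (c : Fin n → Fin n → ℕ → ℕ) (L : List (Fin n)) :
    List (Fin n × Fin n × ℕ) :=
  arcsT c 0 0 (L.tail ++ [0])

lemma arcsT_exists_leaving {n : ℕ} (c : Fin n → Fin n → ℕ → ℕ) (S : Finset (Fin n)) :
    ∀ (M : List (Fin n)) (u : Fin n) (θ : ℕ), u ∈ S → (∃ v ∈ M, v ∉ S) →
      ∃ a ∈ arcsT c u θ M, a.1 ∈ S ∧ a.2.1 ∉ S := by
  intro M
  induction M with
  | nil => rintro u θ _ ⟨v, hv, _⟩; exact absurd hv List.not_mem_nil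
  | cons v rest ih =>
    rintro u θ hu ⟨w, hw, hwS⟩
    by_cases hv : v ∈ S
    · have hwrest : w ∈ rest := by
        rcases List.mem_cons.1 hw with rfl | h
        · exact absurd hv hwS
        · exact h
      obtain ⟨a, ha, hp⟩ := ih v (θ + c u v θ) hv ⟨w, hwrest, hwS⟩
      exact ⟨a, List.mem_cons_of_mem _ ha, hp⟩
    · exact ⟨(u, v, θ), List.mem_cons_self, hu, hv⟩

/-- Let `s ∈ S ⊊ V` and let `θ̂` bound from above the time of the first
departure from `S` of every feasible tour.  Then the lifted subtour elimination
constraint `Σ_{u∈S, v∉S, θ≤θ̂} x_{uv,θ} ≥ 1` holds for every tour with arrival time at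
most `θ^max`. -/
theorem lifted_subtour_elimination (n θmax : ℕ) [NeZero n]
    (c : Fin n → Fin n → ℕ → ℕ)
    (S : Finset (Fin n)) (hs : (0 : Fin n) ∈ S) (hSV : S ≠ Finset.univ)
    (θhat : ℕ)
    (hθhat : ∀ L : List (Fin n), IsTour n L → tourArrival c L ≤ θmax →
      ∀ a : Fin n × Fin n × ℕ,
        (tourArcsT c L).find? (fun a => decide (a.1 ∈ S ∧ a.2.1 ∉ S)) = some a →
        a.2.2 ≤ θhat) :
    ∀ L : List (Fin n), IsTour n L → tourArrival c L ≤ θmax →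
      1 ≤ (tourArcsT c L).countP
        (fun a => decide (a.1 ∈ S ∧ a.2.1 ∉ S ∧ a.2.2 ≤ θhat)) := by
  intro L hL hArr
  obtain ⟨hnd, hlen, hhead⟩ := hL
  -- there is a vertex outside S
  obtain ⟨w, hwS⟩ : ∃ w : Fin n, w ∉ S := by
    by_contra h
    push_neg at h
    exact hSV (Finset.eq_univ_iff_forall.2 h)
  -- every vertex is in L
  have hLuniv : ∀ x : Fin n, x ∈ L := by
    have hcard : L.toFinset = Finset.univ := by
      apply Finset.eq_univ_of_card
      rw [List.toFinset_card_of_nodup hnd, hlen, Fintype.card_fin]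
    intro x
    rw [← List.mem_toFinset, hcard]
    exact Finset.mem_univ x
  -- w is in L.tail ++ [0]
  have hLcons : L = 0 :: L.tail := by
    cases L with
    | nil => simp at hhead
    | cons a t => simp [List.head?] at hhead; simp [hhead]
  have hw' : w ∈ L.tail ++ [0] := by
    have := hLuniv w
    rw [hLcons] at this
    rcases List.mem_cons.1 this with rfl | h
    · exact absurd hs hwS
    · exact List.mem_append_left _ h
  obtain ⟨a, ha, haS, haS'⟩ :=
    arcsT_exists_leaving c S (L.tail ++ [0]) 0 0 hs ⟨w, hw', hwS⟩
  -- find? succeeds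
  have hfind : ∃ b, (tourArcsT c L).find?
      (fun a => decide (a.1 ∈ S ∧ a.2.1 ∉ S)) = some b := by
    rw [← Option.isSome_iff_exists, List.find?_isSome]
    exact ⟨a, ha, by simp [haS, haS']⟩
  obtain ⟨b, hb⟩ := hfind
  have hbmem := List.mem_of_find?_eq_some hb
  have hbp := List.find?_some hb
  simp only [decide_eq_true_eq] at hbp
  have hbθ := hθhat L ⟨hnd, hlen, hhead⟩ hArr b hb
  have : 0 < (tourArcsT c L).countP
      (fun a => decide (a.1 ∈ S ∧ a.2.1 ∉ S ∧ a.2.2 ≤ θhat)) := by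
    rw [List.countP_pos_iff]
    exact ⟨b, hbmem, by simp [hbp.1, hbp.2, hbθ]⟩
  exact this
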